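/- Let D be a division ring, τ an automorphism of D, and let J ∈ M_n(D) be the nilpotent Jordan block with (i, i+1)-entries equal to 1 and all other entries 0. Suppose A ∈ M_n(D) satisfies A·J = J·A^τ, where A^τ is obtained by applying τ to every entry of A. Then A is upper triangular, and its entries satisfy a_{i+1, j+1} = τ^{-1}(a_{i,j}) for all 1 ≤ i, j ≤ n−1; in particular A is determined by its first row. -/

import Mathlib

/-- Matrices intertwining the nilpotent Jordan block via a twist: if A·J = J·A^τ where A^τ
applies the automorphism τ entrywise, then A is upper triangular and its entries satisfy
a_{i+1,j+1} = τ⁻¹(a_{i,j}); in particular A is determined by its first row. -/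
theorem stmt11 (D : Type*) [DivisionRing D] (τ : RingAut D) (n : ℕ)
    (J A : Matrix (Fin n) (Fin n) D)
    (hJ : ∀ i j : Fin n, J i j = if (i : ℕ) + 1 = (j : ℕ) then 1 else 0)
    (h : A * J = J * A.map (fun d => τ d)) :
    (∀ i j : Fin n, (j : ℕ) < (i : ℕ) → A i j = 0) ∧
    (∀ (i j : ℕ) (hi : i + 1 < n) (hj : j + 1 < n),
      A ⟨i + 1, hi⟩ ⟨j + 1, hj⟩ =
        τ⁻¹ (A ⟨i, Nat.lt_of_succ_lt hi⟩ ⟨j, Nat.lt_of_succ_lt hj⟩)) := by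
  have key : ∀ i j : Fin n, (A * J) i j = (J * A.map (fun d => τ d)) i j := by
    intro i j; rw [h]
  have sumA : ∀ (i : Fin n) (j : ℕ) (hj : j + 1 < n),
      (A * J) i ⟨j+1, hj⟩ = A i ⟨j, Nat.lt_of_succ_lt hj⟩ := by
    intro i j hj
    rw [Matrix.mul_apply, Finset.sum_eq_single (⟨j, Nat.lt_of_succ_lt hj⟩ : Fin n)]
    · rw [hJ]; simp
    · intro b _ hb
      rw [hJ]
      have : ¬ ((b : ℕ) + 1 = j + 1) := by
        intro hc
        exact hb (Fin.ext (Nat.succ_injective hc))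
      simp [this, show ¬ ((b : ℕ) = j) by omega]
    · simp
  have sumA0 : ∀ (i : Fin n) (h0 : 0 < n), (A * J) i ⟨0, h0⟩ = 0 := by
    intro i h0
    rw [Matrix.mul_apply]
    apply Finset.sum_eq_zero
    intro k _
    rw [hJ]; simp
  have sumJ : ∀ (i : ℕ) (hi : i + 1 < n) (j : Fin n),
      (J * A.map (fun d => τ d)) ⟨i, Nat.lt_of_succ_lt hi⟩ j = τ (A ⟨i+1, hi⟩ j) := by
    intro i hi j
    rw [Matrix.mul_apply, Finset.sum_eq_single (⟨i+1, hi⟩ : Fin n)]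
    · rw [hJ]; simp [Matrix.map_apply]
    · intro b _ hb
      rw [hJ]
      have : ¬ ((i : ℕ) + 1 = (b : ℕ)) := by
        intro hc; exact hb (Fin.ext hc.symm)
      simp [this]
    · simp
  have step : ∀ (i j : ℕ) (hi : i + 1 < n) (hj : j + 1 < n),
      A ⟨i + 1, hi⟩ ⟨j + 1, hj⟩ =
        τ⁻¹ (A ⟨i, Nat.lt_of_succ_lt hi⟩ ⟨j, Nat.lt_of_succ_lt hj⟩) := by
    intro i j hi hj
    have := key ⟨i, Nat.lt_of_succ_lt hi⟩ ⟨j+1, hj⟩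
    rw [sumA _ j hj, sumJ i hi] at this
    rw [this]
    exact (RingEquiv.symm_apply_apply τ _).symm
  refine ⟨?_, step⟩
  have col0 : ∀ (i : ℕ) (hi : i + 1 < n), A ⟨i+1, hi⟩ ⟨0, Nat.zero_lt_of_lt hi⟩ = 0 := by
    intro i hi
    have := key ⟨i, Nat.lt_of_succ_lt hi⟩ ⟨0, Nat.zero_lt_of_lt hi⟩
    rw [sumA0 _ (Nat.zero_lt_of_lt hi), sumJ i hi] at this
    have h2 : τ (A ⟨i+1, hi⟩ ⟨0, Nat.zero_lt_of_lt hi⟩) = τ 0 := by rw [← this, map_zero]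
    exact τ.injective h2
  suffices H : ∀ jv i j : ℕ, ∀ (hi : i < n) (hj : j < n), j = jv → j < i →
      A ⟨i, hi⟩ ⟨j, hj⟩ = 0 by
    intro i j hij
    have := H j i j i.2 j.2 rfl hij
    simpa using this
  intro jv
  induction jv with
  | zero =>
    intro i j hi hj hj0 hij
    subst hj0
    obtain ⟨i', rfl⟩ : ∃ i', i = i' + 1 := ⟨i - 1, (Nat.succ_pred_eq_of_pos hij).symm⟩
    exact col0 i' hi
  | succ jv ih =>
    intro i j hi hj hj0 hij
    subst hj0
    obtain ⟨i', rfl⟩ : ∃ i', i = i' + 1 :=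
      ⟨i - 1, (Nat.succ_pred_eq_of_pos (Nat.lt_of_le_of_lt (Nat.zero_le _) hij)).symm⟩
    rw [step i' jv hi hj, ih i' jv (Nat.lt_of_succ_lt hi) (Nat.lt_of_succ_lt hj) rfl
      (Nat.lt_of_succ_lt_succ hij), map_zero]
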